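/- Let f : ℝ^n_{>0} → ℝ^n_{>0} be order-preserving, homogeneous, multiplicatively convex, and analytic. Then f is type K order-preserving if and only if for every i ∈ {1,…,n} the directed graph G(f) has an arc from i to itself, i.e., lim_{t→∞} f(exp(t e_i))_i = ∞. -/

import Mathlib

open Filter Topology

/-- The directed graph `G(f)` has an arc from `i` to `j` when
`f(exp(t e_j))_i → ∞` as `t → ∞`. -/
def GraphArc {n : ℕ} (f : (Fin n → ℝ) → (Fin n → ℝ)) (i j : Fin n) : Prop :=
  Tendsto (fun t : ℝ => f (fun k => Real.exp (if k = j then t else 0)) i) atTop atTop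

/-- an order-preserving, homogeneous, multiplicatively convex, analytic map of
the open positive cone of ℝⁿ is type K order-preserving iff `G(f)` has an arc from each
vertex to itself. -/
theorem typeK_iff_loops
    {n : ℕ} (f : (Fin n → ℝ) → (Fin n → ℝ))
    (hf_maps : ∀ x : Fin n → ℝ, (∀ i, 0 < x i) → ∀ i, 0 < f x i)
    (hf_mono : ∀ x y : Fin n → ℝ, (∀ i, 0 < x i) → (∀ i, 0 < y i) → x ≤ y → f x ≤ f y)
    (hf_hom : ∀ x : Fin n → ℝ, (∀ i, 0 < x i) → ∀ t : ℝ, 0 < t → f (t • x) = t • f x)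
    (hf_mconv : ∀ i, ConvexOn ℝ Set.univ
      (fun v : Fin n → ℝ => Real.log (f (fun j => Real.exp (v j)) i)))
    (hf_anal : AnalyticOn ℝ f {x : Fin n → ℝ | ∀ i, 0 < x i}) :
    (∀ x y : Fin n → ℝ, (∀ i, 0 < x i) → (∀ i, 0 < y i) → x ≤ y →
        ∃ ε > (0:ℝ), ∀ i, ε * (y i - x i) ≤ f y i - f x i) ↔
      (∀ i, GraphArc f i i) := by
  constructor
  · -- forward direction: type K ⇒ loops
    intro hK i
    set ψ : ℝ → ℝ := fun t =>
      Real.log (f (fun k => Real.exp (if k = i then t else 0)) i) with hψdef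
    have hpos : ∀ t : ℝ, ∀ j, (0:ℝ) < Real.exp (if j = i then t else 0) :=
      fun t j => Real.exp_pos _
    have hfpos : ∀ t : ℝ, 0 < f (fun k => Real.exp (if k = i then t else 0)) i :=
      fun t => hf_maps _ (hpos t) i
    have hx0 : (fun k : Fin n => Real.exp (if k = i then (0:ℝ) else 0))
        = fun _ => (1:ℝ) := by
      funext k; simp
    have h01 : ψ 0 < ψ 1 := by
      obtain ⟨ε, hε, hεi⟩ := hK (fun _ => (1:ℝ))
        (fun k => Real.exp (if k = i then (1:ℝ) else 0))
        (fun j => one_pos) (hpos 1)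
        (by
          intro k
          rcases eq_or_ne k i with h | h
          · simp only [h, if_pos rfl]
            exact Real.one_le_exp (by norm_num)
          · simp [h])
      have h1e : (1:ℝ) < Real.exp 1 := by
        have := Real.add_one_le_exp (1:ℝ); linarith
      have hthis := hεi i
      simp at hthis
      have hlt : f (fun _ => (1:ℝ)) i
          < f (fun k => Real.exp (if k = i then (1:ℝ) else 0)) i := by
        nlinarith
      have hψ0 : ψ 0 = Real.log (f (fun _ : Fin n => (1:ℝ)) i) := by
        rw [hψdef]; simp only; rw [hx0]
      rw [hψ0, hψdef]
      exact Real.log_lt_log (hf_maps _ (fun j => one_pos) i) hlt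
    -- convexity of ψ
    set δ : Fin n → ℝ := fun k => if k = i then (1:ℝ) else 0 with hδ
    have hδt : ∀ t : ℝ, (fun k => Real.exp (if k = i then t else 0))
        = fun j => Real.exp ((t • δ) j) := by
      intro t; funext j
      rcases eq_or_ne j i with h | h <;> simp [hδ, h]
    have hψeq : ∀ t : ℝ, ψ t
        = Real.log (f (fun j => Real.exp ((t • δ) j)) i) := by
      intro t; rw [hψdef]; simp only; rw [hδt t]
    have hψconv : ConvexOn ℝ Set.univ ψ := by
      have h1 := (hf_mconv i).comp_affineMap (AffineMap.lineMap (0 : Fin n → ℝ) δ)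
      have h2 : ψ = (fun v : Fin n → ℝ => Real.log (f (fun j => Real.exp (v j)) i))
          ∘ (AffineMap.lineMap (0 : Fin n → ℝ) δ) := by
        funext t
        simp only [Function.comp_apply, AffineMap.lineMap_apply, vsub_eq_sub, sub_zero,
          vadd_eq_add, add_zero]
        rw [hψeq t]
      rw [h2]
      simpa using h1
    have hkey : ∀ t : ℝ, 1 < t → ψ 0 + t * (ψ 1 - ψ 0) ≤ ψ t := by
      intro t ht
      have hsl := hψconv.slope_mono_adjacent (Set.mem_univ (0:ℝ)) (Set.mem_univ t)
        (show (0:ℝ) < 1 by norm_num) ht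
      have h1 : ψ 1 - ψ 0 ≤ (ψ t - ψ 1) / (t - 1) := by
        simpa using hsl
      have h2 : (ψ 1 - ψ 0) * (t - 1) ≤ ψ t - ψ 1 :=
        (le_div_iff₀ (by linarith)).1 h1
      nlinarith
    -- conclude tendsto
    have hs : 0 < ψ 1 - ψ 0 := by linarith
    have hlin : Tendsto (fun t : ℝ => ψ 0 + t * (ψ 1 - ψ 0)) atTop atTop :=
      tendsto_atTop_add_const_left _ _ (Tendsto.atTop_mul_const hs tendsto_id)
    have hexp : Tendsto (fun t : ℝ => Real.exp (ψ 0 + t * (ψ 1 - ψ 0))) atTop atTop :=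
      Real.tendsto_exp_atTop.comp hlin
    refine tendsto_atTop_mono' atTop ?_ hexp
    filter_upwards [eventually_gt_atTop (1:ℝ)] with t ht
    have := hkey t ht
    calc Real.exp (ψ 0 + t * (ψ 1 - ψ 0)) ≤ Real.exp (ψ t) := Real.exp_le_exp.2 this
      _ = f (fun k => Real.exp (if k = i then t else 0)) i := Real.exp_log (hfpos t)
  · -- backward direction: loops ⇒ type K
    intro hloop x y hx hy hxy
    -- strictness in each coordinate where x i < y i
    have key : ∀ i, x i < y i → f x i < f y i := by
      intro i hxi
      by_contra hle
      have heq : f x i = f y i := le_antisymm (hf_mono x y hx hy hxy i) (not_lt.1 hle)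
      set u : Fin n → ℝ := fun j => Real.log (x j) with hu
      set d : Fin n → ℝ := fun j => Real.log (y j) - Real.log (x j) with hd
      have hd0 : ∀ j, 0 ≤ d j := fun j =>
        sub_nonneg.2 (Real.log_le_log (hx j) (hxy j))
      have hdi : 0 < d i := sub_pos.2 (Real.log_lt_log (hx i) hxi)
      set F : ℝ → (Fin n → ℝ) := fun t => fun j => Real.exp (u j + t * d j) with hF
      have hFpos : ∀ t j, 0 < F t j := fun t j => Real.exp_pos _
      have hfFpos : ∀ t, 0 < f (F t) i := fun t => hf_maps _ (hFpos t) i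
      set φ : ℝ → ℝ := fun t => Real.log (f (F t) i) with hφ
      have hF0 : F 0 = x := by
        funext j; simp [hF, hu, Real.exp_log (hx j)]
      have hF1 : F 1 = y := by
        funext j; simp [hF, hu, hd, Real.exp_log (hy j)]
      have hφmono : ∀ s t : ℝ, s ≤ t → φ s ≤ φ t := by
        intro s t hst
        apply Real.log_le_log (hfFpos s)
        apply hf_mono _ _ (hFpos s) (hFpos t) _ i
        intro j
        have h2 : s * d j ≤ t * d j := mul_le_mul_of_nonneg_right hst (hd0 j)
        show Real.exp (u j + s * d j) ≤ Real.exp (u j + t * d j)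
        exact Real.exp_le_exp.2 (by linarith)
      have hφ01 : φ 0 = φ 1 := by rw [hφ]; simp only [hF0, hF1, heq]
      -- φ is constant on [0,1]
      have hconst : ∀ t ∈ Set.Icc (0:ℝ) 1, φ t = φ 0 := by
        intro t ht
        refine le_antisymm ?_ (hφmono 0 t ht.1)
        rw [hφ01]; exact hφmono t 1 ht.2
      -- φ is analytic on ℝ
      have hopen : IsOpen {z : Fin n → ℝ | ∀ i, 0 < z i} := by
        have : {z : Fin n → ℝ | ∀ i, 0 < z i} = ⋂ j, {z : Fin n → ℝ | 0 < z j} := by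
          ext z; simp
        rw [this]
        exact isOpen_iInter_of_finite fun j =>
          isOpen_lt continuous_const (continuous_apply j)
      have hf_analNhd : AnalyticOnNhd ℝ f {x : Fin n → ℝ | ∀ i, 0 < x i} :=
        (hopen.analyticOn_iff_analyticOnNhd).1 hf_anal
      have hφanal : AnalyticOnNhd ℝ φ Set.univ := by
        intro t _
        have hFa : AnalyticAt ℝ F t := by
          apply AnalyticAt.pi
          intro j
          exact AnalyticAt.rexp
            ((analyticAt_const).add ((analyticAt_id).mul analyticAt_const))
        have hfa : AnalyticAt ℝ (fun s => f (F s)) t :=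
          (hf_analNhd (F t) (fun j => hFpos t j)).comp hFa
        have hfi : AnalyticAt ℝ (fun s => f (F s) i) t := by
          have h := AnalyticAt.comp (g := fun v : Fin n → ℝ => v i)
            (f := fun s => f (F s)) (x := t)
            ((ContinuousLinearMap.proj (R := ℝ) (φ := fun _ : Fin n => ℝ) i).analyticAt
              (f (F t))) hfa
          simpa [Function.comp_def] using h
        have hlogA : AnalyticAt ℝ Real.log (f (F t) i) :=
          ((Real.contDiffAt_log (n := (⊤ : WithTop ℕ∞))).2
            (ne_of_gt (hfFpos t))).analyticAt
        have h2 := AnalyticAt.comp (g := Real.log) (f := fun s => f (F s) i) (x := t)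
          hlogA hfi
        simpa [Function.comp_def, hφ] using h2
      -- identity theorem: φ is constant on ℝ
      have hφconst : ∀ t : ℝ, φ t = φ 0 := by
        have heqn : Set.EqOn φ (fun _ => φ 0) Set.univ := by
          apply AnalyticOnNhd.eqOn_of_preconnected_of_eventuallyEq hφanal
            analyticOnNhd_const isPreconnected_univ (Set.mem_univ (1/2 : ℝ))
          filter_upwards [Ioo_mem_nhds (by norm_num : (0:ℝ) < 1/2)
            (by norm_num : (1/2:ℝ) < 1)] with t ht
          exact hconst t ⟨le_of_lt ht.1, le_of_lt ht.2⟩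
        exact fun t => heqn (Set.mem_univ t)
      -- derive a bound contradicting the loop at i
      set c : ℝ := 1 + ∑ j, |u j| with hc
      have hc0 : (0:ℝ) ≤ c := by
        have : (0:ℝ) ≤ ∑ j, |u j| := Finset.sum_nonneg fun j _ => abs_nonneg _
        linarith
      have hcj : ∀ j, -u j ≤ c := by
        intro j
        have h1 : |u j| ≤ ∑ j', |u j'| :=
          Finset.single_le_sum (fun j' _ => abs_nonneg (u j')) (Finset.mem_univ j)
        have := neg_abs_le (u j)
        simp only [hc]; linarith
      have hbound : ∀ s : ℝ,
          f (fun k => Real.exp (if k = i then s else 0)) i ≤ Real.exp (c + φ 0) := by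
        intro s
        set t : ℝ := max 0 ((s - u i - c) / d i) with htdef
        have ht0 : 0 ≤ t := le_max_left _ _
        have hti : s - u i - c ≤ t * d i := by
          have h1 : (s - u i - c) / d i ≤ t := le_max_right _ _
          calc s - u i - c = ((s - u i - c) / d i) * d i := by field_simp
            _ ≤ t * d i := mul_le_mul_of_nonneg_right h1 (le_of_lt hdi)
        -- pointwise comparison
        have hcomp : (fun k => Real.exp (if k = i then s else 0))
            ≤ fun j => Real.exp (u j + t * d j + c) := by
          intro j
          apply Real.exp_le_exp.2
          rcases eq_or_ne j i with h | h
          · subst h; simp only [if_pos rfl]; simp; linarith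
          · simp only [if_neg h]
            have := hcj j
            have := mul_nonneg ht0 (hd0 j)
            linarith
        have hmono := hf_mono _ _ (fun j => Real.exp_pos _) (fun j => Real.exp_pos _)
          hcomp i
        -- homogeneity: translate by c
        have htrans : (fun j => Real.exp (u j + t * d j + c)) = Real.exp c • F t := by
          funext j
          simp only [hF, Pi.smul_apply, smul_eq_mul, ← Real.exp_add]
          ring_nf
        have hval : f (fun j => Real.exp (u j + t * d j + c)) i
            = Real.exp c * f (F t) i := by
          rw [htrans, hf_hom (F t) (fun j => hFpos t j) (Real.exp c) (Real.exp_pos c)]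
          simp
        have hlog : f (fun j => Real.exp (u j + t * d j + c)) i ≤ Real.exp (c + φ 0) := by
          have hft : f (F t) i = Real.exp (φ t) := (Real.exp_log (hfFpos t)).symm
          rw [hval, hft, hφconst t, ← Real.exp_add]
        exact le_trans hmono hlog
      -- contradiction with the loop at i
      obtain ⟨s, hs⟩ := ((hloop i).eventually_gt_atTop (Real.exp (c + φ 0))).exists
      exact absurd (hbound s) (not_le.2 hs)
    -- assemble ε
    rcases Nat.eq_zero_or_pos n with hn | hn
    · refine ⟨1, one_pos, fun i => ?_⟩
      exact absurd i.2 (by omega)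
    · -- per-coordinate ε
      have hper : ∀ i : Fin n, ∃ ε > (0:ℝ), ε * (y i - x i) ≤ f y i - f x i := by
        intro i
        rcases eq_or_lt_of_le (hxy i) with h | h
        · exact ⟨1, one_pos, by
            rw [← h]
            simp only [sub_self, mul_zero]
            exact sub_nonneg.2 (hf_mono x y hx hy hxy i)⟩
        · refine ⟨(f y i - f x i) / (y i - x i), ?_, ?_⟩
          · apply div_pos (sub_pos.2 (key i h)) (sub_pos.2 h)
          · rw [div_mul_cancel₀]
            exact ne_of_gt (sub_pos.2 h)
      choose ε hε hεle using hper
      have hne : (Finset.univ : Finset (Fin n)).Nonempty := by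
        refine ⟨⟨0, hn⟩, Finset.mem_univ _⟩
      refine ⟨Finset.univ.inf' hne ε, ?_, ?_⟩
      · show (0:ℝ) < Finset.univ.inf' hne ε
        rw [Finset.lt_inf'_iff]
        exact fun i _ => hε i
      · intro i
        have h1 : Finset.univ.inf' hne ε ≤ ε i := Finset.inf'_le _ (Finset.mem_univ i)
        have h2 : 0 ≤ y i - x i := sub_nonneg.2 (hxy i)
        calc Finset.univ.inf' hne ε * (y i - x i) ≤ ε i * (y i - x i) :=
              mul_le_mul_of_nonneg_right h1 h2
          _ ≤ f y i - f x i := hεle i
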